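/- Let S be a Boolean sublattice all of whose quarks have size exactly 2. If S is a UFS, then: (1) the pairing graph G_p(S) contains no cycle of length 3; and (2) G_p(S) contains no path of length 4 and no cycle of length 4. -/

import Mathlib

open scoped ENNReal

/-- A Boolean sublattice: a set of finite subsets of `ℕ` that contains `∅` and is
closed under binary unions (ordered by inclusion, with joins given by unions). -/
def IsBSL (S : Set (Finset ℕ)) : Prop :=
  ∅ ∈ S ∧ ∀ A ∈ S, ∀ B ∈ S, A ∪ B ∈ S

/-- A quark of `S`: a nonempty element of `S` covering `∅` in `S`, i.e. there is no
`B ∈ S` with `∅ ⊊ B ⊊ A`. -/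
def IsQuark (S : Set (Finset ℕ)) (A : Finset ℕ) : Prop :=
  A ∈ S ∧ A ≠ ∅ ∧ ∀ B ∈ S, B ≠ ∅ → ¬ B ⊂ A

/-- `z` is a factorization of `X` into quarks of `S`: a finite set of quarks whose
union is `X` such that no proper subset of `z` has union `X`. -/
def IsFactorization (S : Set (Finset ℕ)) (X : Finset ℕ) (z : Finset (Finset ℕ)) : Prop :=
  (∀ A ∈ z, IsQuark S A) ∧ z.sup id = X ∧ ∀ w, w ⊂ z → w.sup id ≠ X

/-- The set `Z(X)` of factorizations of `X` in `S`. -/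
def Factorizations (S : Set (Finset ℕ)) (X : Finset ℕ) : Set (Finset (Finset ℕ)) :=
  {z | IsFactorization S X z}

/-- `S` is factorizable: every nonempty element of `S` has a factorization. -/
def Factorizable (S : Set (Finset ℕ)) : Prop :=
  ∀ X ∈ S, X ≠ ∅ → (Factorizations S X).Nonempty

/-- `S` is a unique factorization semilattice: every nonempty element of `S` has
exactly one factorization. -/
def IsUFS (S : Set (Finset ℕ)) : Prop :=
  ∀ X ∈ S, X ≠ ∅ → ∃! z, z ∈ Factorizations S X

/-- `S` is a half-factorial semilattice: for every nonempty `X ∈ S` the set of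
factorization lengths of `X` is a singleton. -/
def IsHFS (S : Set (Finset ℕ)) : Prop :=
  ∀ X ∈ S, X ≠ ∅ → (Factorizations S X).Nonempty ∧
    ∀ z ∈ Factorizations S X, ∀ z' ∈ Factorizations S X, z.card = z'.card

/-- `S` is a length-factorial semilattice: two distinct factorizations of the same
nonempty element of `S` have different cardinalities. -/
def IsLFS (S : Set (Finset ℕ)) : Prop :=
  ∀ X ∈ S, X ≠ ∅ → ∀ z ∈ Factorizations S X, ∀ z' ∈ Factorizations S X,
    z.card = z'.card → z = z'

/-- The Boolean sublattice generated by a collection `𝒜` of finite subsets of `ℕ`: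
the smallest set of finite subsets of `ℕ` containing `{∅} ∪ 𝒜` and closed under
binary unions. -/
def genBSL (𝒜 : Set (Finset ℕ)) : Set (Finset ℕ) :=
  ⋂₀ {T | IsBSL T ∧ 𝒜 ⊆ T}

/-- An isolated quark: a quark disjoint from every other quark of `S`. -/
def IsIsolatedQuark (S : Set (Finset ℕ)) (A : Finset ℕ) : Prop :=
  IsQuark S A ∧ ∀ B, IsQuark S B → B ≠ A → Disjoint A B

/-- An excess quark: a quark each of whose elements belongs to some other quark. -/
def IsExcessQuark (S : Set (Finset ℕ)) (A : Finset ℕ) : Prop :=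
  IsQuark S A ∧ ∀ j ∈ A, ∃ B, IsQuark S B ∧ B ≠ A ∧ j ∈ B

/-- The quarkic graph of `S`: vertices are the quarks of `S`, with an edge between
distinct quarks having nonempty intersection. -/
def quarkicGraph (S : Set (Finset ℕ)) : SimpleGraph {A : Finset ℕ // IsQuark S A} :=
  SimpleGraph.fromRel (fun A B => ((A : Finset ℕ) ∩ (B : Finset ℕ)).Nonempty)

/-- The vertex set `V(C)` of a connected component of the quarkic graph, as a set of
finite subsets of `ℕ`. -/
def compVerts (S : Set (Finset ℕ)) (C : (quarkicGraph S).ConnectedComponent) :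
    Set (Finset ℕ) :=
  Subtype.val '' C.supp

/-- The pairing graph of `S` (for `S` with quarks of size at most 2): vertices are `ℕ`,
with an edge between distinct `a`, `b` whenever `{a, b}` is a quark of `S`. -/
def pairingGraph (S : Set (Finset ℕ)) : SimpleGraph ℕ :=
  SimpleGraph.fromRel (fun a b => IsQuark S {a, b})

/-- The edge set of a connected component `C` of the pairing graph, each edge `{a,b}`
regarded as the 2-element subset `{a, b}` of `ℕ`. -/
def compEdgeSets (S : Set (Finset ℕ)) (C : (pairingGraph S).ConnectedComponent) :
    Set (Finset ℕ) :=
  {A | ∃ a b : ℕ, (pairingGraph S).Adj a b ∧ a ∈ C.supp ∧ A = {a, b}}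

/-- `v` has degree at least `n` in `G` (valid also for infinite graphs). -/
def DegAtLeast {V : Type*} (G : SimpleGraph V) (v : V) (n : ℕ) : Prop :=
  ∃ s : Finset V, s.card = n ∧ ∀ u ∈ s, G.Adj v u

/-- `v` has degree exactly `n` in `G`: its neighbor set is a finite set of size `n`. -/
def DegExactly {V : Type*} (G : SimpleGraph V) (v : V) (n : ℕ) : Prop :=
  ∃ s : Finset V, s.card = n ∧ ∀ u, G.Adj v u ↔ u ∈ s

/-- A leaf: a vertex of degree exactly 1. -/
def IsLeaf {V : Type*} (G : SimpleGraph V) (v : V) : Prop := DegExactly G v 1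

/-- A candy graph: a connected simple graph of diameter at most 4 that contains a
cycle of length `k` if and only if `k = 4`. -/
def IsCandy {V : Type*} (G : SimpleGraph V) : Prop :=
  G.Connected ∧
  (∀ u v : V, ∃ p : G.Walk u v, p.length ≤ 4) ∧
  (∀ k : ℕ, (∃ (v : V) (c : G.Walk v v), c.IsCycle ∧ c.length = k) ↔ k = 4)

/-- The connected component `C` of `G` contains no cycle. -/
def CompAcyclic {V : Type*} (G : SimpleGraph V) (C : G.ConnectedComponent) : Prop :=
  ∀ v ∈ C.supp, ∀ c : G.Walk v v, ¬ c.IsCycle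

/-- Every path inside the connected component `C` has length at most `d` (for a tree
component this says its diameter is at most `d`). -/
def CompDiamLe {V : Type*} (G : SimpleGraph V) (C : G.ConnectedComponent) (d : ℕ) : Prop :=
  ∀ (u v : V), u ∈ C.supp → ∀ p : G.Walk u v, p.IsPath → p.length ≤ d

/-- The connected component `C` of `G` is (as an induced subgraph) the cycle graph on
`n` vertices. -/
def CompIsCycleGraph {V : Type*} (G : SimpleGraph V) (C : G.ConnectedComponent)
    (n : ℕ) : Prop :=
  ∃ v : Fin n → V, Function.Injective v ∧ C.supp = Set.range v ∧
    ∀ i j : Fin n, G.Adj (v i) (v j) ↔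
      ((j : ℕ) = ((i : ℕ) + 1) % n ∨ (i : ℕ) = ((j : ℕ) + 1) % n)

/-- The connected component `C` of `G` is (as an induced subgraph) a candy graph:
it has diameter at most 4 and contains a cycle of length `k` iff `k = 4`. -/
def CompIsCandy {V : Type*} (G : SimpleGraph V) (C : G.ConnectedComponent) : Prop :=
  (∀ u v, u ∈ C.supp → v ∈ C.supp → ∃ p : G.Walk u v, p.length ≤ 4) ∧
  (∀ k : ℕ, (∃ v ∈ C.supp, ∃ c : G.Walk v v, c.IsCycle ∧ c.length = k) ↔ k = 4)

/-- The set of factorization lengths `L(X)` of `X` in `S`. -/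
def lengthsOf (S : Set (Finset ℕ)) (X : Finset ℕ) : Set ℕ :=
  Finset.card '' Factorizations S X

/-- The elasticity `ρ(X) = sup L(X) / min L(X)` of a nonempty element `X` of `S`,
valued in the extended nonnegative reals. -/
noncomputable def elasticityOf (S : Set (Finset ℕ)) (X : Finset ℕ) : ℝ≥0∞ :=
  (⨆ n ∈ lengthsOf S X, (n : ℝ≥0∞)) / ((sInf (lengthsOf S X) : ℕ) : ℝ≥0∞)

/-- The elasticity `ρ(S)` of a Boolean sublattice `S`. -/
noncomputable def elasticity (S : Set (Finset ℕ)) : ℝ≥0∞ :=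
  ⨆ X ∈ {X | X ∈ S ∧ X ≠ ∅}, elasticityOf S X

lemma mem_S_sup (S : Set (Finset ℕ)) (hS : IsBSL S) (z : Finset (Finset ℕ))
    (h : ∀ A ∈ z, A ∈ S) : z.sup id ∈ S := by
  classical
  exact Finset.sup_induction hS.1 (fun a ha b hb => hS.2 a ha b hb) h

lemma sup_card_le (z : Finset (Finset ℕ)) (h : ∀ A ∈ z, A.card ≤ 2) :
    (z.sup id).card ≤ 2 * z.card := by
  classical
  induction z using Finset.induction with
  | empty => simp
  | @insert A s hA ih =>
    rw [Finset.sup_insert, Finset.card_insert_of_notMem hA]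
    have h1 : A.card ≤ 2 := h A (Finset.mem_insert_self _ _)
    have h2 : (s.sup id).card ≤ 2 * s.card :=
      ih (fun B hB => h B (Finset.mem_insert_of_mem hB))
    have h3 : ((id A ⊔ s.sup id : Finset ℕ)).card ≤ A.card + (s.sup id).card :=
      Finset.card_union_le _ _
    simp only [id] at h3 ⊢
    omega

lemma key_lemma (S : Set (Finset ℕ)) (hS : IsBSL S)
    (hq : ∀ A : Finset ℕ, IsQuark S A → A.card = 2) (hufs : IsUFS S)
    (z1 z2 : Finset (Finset ℕ))
    (h1 : ∀ A ∈ z1, IsQuark S A) (h2 : ∀ A ∈ z2, IsQuark S A)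
    (hsup : z1.sup id = z2.sup id)
    (hc1 : 2 * z1.card < (z1.sup id).card + 2)
    (hc2 : 2 * z2.card < (z1.sup id).card + 2)
    (hXne : z1.sup id ≠ ∅) (hne : z1 ≠ z2) : False := by
  classical
  have hXS : z1.sup id ∈ S := mem_S_sup S hS z1 (fun A hA => (h1 A hA).1)
  have min1 : ∀ (z : Finset (Finset ℕ)), (∀ A ∈ z, IsQuark S A) →
      2 * z.card < (z1.sup id).card + 2 →
      ∀ w, w ⊂ z → w.sup id ≠ z1.sup id := by
    intro z hz hcz w hw heq
    have hwc := Finset.card_lt_card hw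
    have hle : (w.sup id).card ≤ 2 * w.card :=
      sup_card_le w (fun A hA => le_of_eq (hq A (hz A (hw.1 hA))))
    rw [heq] at hle
    omega
  have f1 : z1 ∈ Factorizations S (z1.sup id) := ⟨h1, rfl, min1 z1 h1 hc1⟩
  have f2 : z2 ∈ Factorizations S (z1.sup id) :=
    ⟨h2, hsup.symm, fun w hw => min1 z2 h2 hc2 w hw⟩
  obtain ⟨z, _, hu⟩ := hufs _ hXS hXne
  exact hne ((hu z1 f1).trans (hu z2 f2).symm)

lemma adj_quark (S : Set (Finset ℕ)) {a b : ℕ} (h : (pairingGraph S).Adj a b) :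
    IsQuark S {a, b} := by
  rw [pairingGraph, SimpleGraph.fromRel_adj] at h
  rcases h.2 with h' | h'
  · exact h'
  · rwa [Finset.pair_comm]

set_option maxHeartbeats 1000000 in
/-- If a Boolean sublattice `S` all of whose quarks have size exactly 2
is a UFS, then its pairing graph contains no cycle of length 3, no path of length 4,
and no cycle of length 4. -/
theorem stmt_8 (S : Set (Finset ℕ)) (hS : IsBSL S)
    (hq : ∀ A : Finset ℕ, IsQuark S A → A.card = 2) (hufs : IsUFS S) :
    (¬ ∃ (v : ℕ) (c : (pairingGraph S).Walk v v), c.IsCycle ∧ c.length = 3) ∧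
    (¬ ∃ (u v : ℕ) (p : (pairingGraph S).Walk u v), p.IsPath ∧ p.length = 4) ∧
    (¬ ∃ (v : ℕ) (c : (pairingGraph S).Walk v v), c.IsCycle ∧ c.length = 4) := by
  classical
  refine ⟨?_, ?_, ?_⟩
  · rintro ⟨v, c, hcyc, hlen⟩
    cases c with
    | nil => simp at hlen
    | cons h1 q =>
      rename_i b
      cases q with
      | nil => simp at hlen
      | cons h2 q =>
        rename_i w
        cases q with
        | nil => simp at hlen
        | cons h3 q =>
          cases q with
          | cons h4 q => simp [SimpleGraph.Walk.length_cons] at hlen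
          | nil =>
            -- vertices v, b, w with edges v-b, b-w, w-v
            rw [SimpleGraph.Walk.isCycle_def] at hcyc
            obtain ⟨-, -, hnd⟩ := hcyc
            simp only [SimpleGraph.Walk.support_cons, SimpleGraph.Walk.support_nil,
              List.tail_cons, List.nodup_cons, List.mem_cons, List.mem_singleton,
              List.not_mem_nil, List.nodup_nil, or_false, not_or, and_true] at hnd
            obtain ⟨⟨hbw, hbv⟩, hwv, -⟩ := hnd
            have hvb : v ≠ b := (pairingGraph S).ne_of_adj h1
            have q1 := adj_quark S h1
            have q2 := adj_quark S h2
            have q3 := adj_quark S h3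
            refine key_lemma S hS hq hufs {({v,b} : Finset ℕ), {b,w}} {({v,b} : Finset ℕ), {w,v}}
              ?_ ?_ ?_ ?_ ?_ ?_ ?_
            · intro A hA
              simp only [Finset.mem_insert, Finset.mem_singleton] at hA
              rcases hA with rfl | rfl
              · exact q1
              · exact q2
            · intro A hA
              simp only [Finset.mem_insert, Finset.mem_singleton] at hA
              rcases hA with rfl | rfl
              · exact q1
              · exact q3
            · simp only [Finset.sup_insert, Finset.sup_singleton, id_eq, Finset.sup_eq_union]
              ext x
              simp [Finset.mem_union, Finset.mem_insert, Finset.mem_singleton]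
              tauto
            · have hX : (({({v,b} : Finset ℕ), {b,w}} : Finset (Finset ℕ)).sup id) = ({v, b, w} : Finset ℕ) := by
                simp only [Finset.sup_insert, Finset.sup_singleton, id_eq, Finset.sup_eq_union]
                ext x
                simp [Finset.mem_union, Finset.mem_insert, Finset.mem_singleton]
              rw [hX]
              have hc3 : ({v, b, w} : Finset ℕ).card = 3 :=
                Finset.card_eq_three.mpr ⟨v, b, w, hvb, fun h => hwv h.symm, hbw, rfl⟩
              have hcard : ({({v,b} : Finset ℕ), {b,w}} : Finset (Finset ℕ)).card ≤ 2 :=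
                Finset.card_insert_le _ _ |>.trans (by simp)
              omega
            · have hX : (({({v,b} : Finset ℕ), {b,w}} : Finset (Finset ℕ)).sup id) = ({v, b, w} : Finset ℕ) := by
                simp only [Finset.sup_insert, Finset.sup_singleton, id_eq, Finset.sup_eq_union]
                ext x
                simp [Finset.mem_union, Finset.mem_insert, Finset.mem_singleton]
              rw [hX]
              have hc3 : ({v, b, w} : Finset ℕ).card = 3 :=
                Finset.card_eq_three.mpr ⟨v, b, w, hvb, fun h => hwv h.symm, hbw, rfl⟩
              have hcard : ({({v,b} : Finset ℕ), {w,v}} : Finset (Finset ℕ)).card ≤ 2 :=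
                Finset.card_insert_le _ _ |>.trans (by simp)
              omega
            · simp only [Finset.sup_insert, Finset.sup_singleton, id_eq, Finset.sup_eq_union]
              intro hemp
              have : v ∈ (∅ : Finset ℕ) := by
                rw [← hemp]; simp
              simp at this
            · intro heq
              have hmem : ({b, w} : Finset ℕ) ∈ ({({v,b} : Finset ℕ), {w,v}} : Finset (Finset ℕ)) := by
                rw [← heq]; simp
              simp only [Finset.mem_insert, Finset.mem_singleton] at hmem
              rcases hmem with h' | h'
              · have : v ∈ ({b, w} : Finset ℕ) := by rw [h']; simp
                simp only [Finset.mem_insert, Finset.mem_singleton] at this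
                rcases this with h'' | h''
                · exact hvb h''
                · exact hwv h''.symm
              · have : v ∈ ({b, w} : Finset ℕ) := by rw [h']; simp
                simp only [Finset.mem_insert, Finset.mem_singleton] at this
                rcases this with h'' | h''
                · exact hvb h''
                · exact hwv h''.symm
  · rintro ⟨u, v, p, hpath, hlen⟩
    cases p with
    | nil => simp at hlen
    | cons h1 q =>
      rename_i a
      cases q with
      | nil => simp at hlen
      | cons h2 q =>
        rename_i b
        cases q with
        | nil => simp at hlen
        | cons h3 q =>
          rename_i c
          cases q with
          | nil => simp at hlen
          | cons h4 q =>
            cases q with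
            | cons h5 q => simp [SimpleGraph.Walk.length_cons] at hlen
            | nil =>
              rw [SimpleGraph.Walk.isPath_def] at hpath
              simp only [SimpleGraph.Walk.support_cons, SimpleGraph.Walk.support_nil,
                List.nodup_cons, List.mem_cons, List.mem_singleton,
                List.not_mem_nil, List.nodup_nil, or_false, not_or, and_true] at hpath
              obtain ⟨⟨hua, hub, huc, huv⟩, ⟨hab, hac, hav⟩, ⟨hbc, hbv⟩, hcv, -⟩ := hpath
              have q1 := adj_quark S h1
              have q2 := adj_quark S h2
              have q3 := adj_quark S h3
              have q4 := adj_quark S h4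
              have hX1 : (({({u,a} : Finset ℕ), {b,c}, {c,v}} : Finset (Finset ℕ)).sup id)
                  = ({u, a, b, c, v} : Finset ℕ) := by
                simp only [Finset.sup_insert, Finset.sup_singleton, id_eq, Finset.sup_eq_union]
                ext x
                simp [Finset.mem_union, Finset.mem_insert, Finset.mem_singleton]
                tauto
              have hX2 : (({({u,a} : Finset ℕ), {a,b}, {c,v}} : Finset (Finset ℕ)).sup id)
                  = ({u, a, b, c, v} : Finset ℕ) := by
                simp only [Finset.sup_insert, Finset.sup_singleton, id_eq, Finset.sup_eq_union]
                ext x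
                simp [Finset.mem_union, Finset.mem_insert, Finset.mem_singleton]
                tauto
              have hXcard : ({u, a, b, c, v} : Finset ℕ).card = 5 := by
                rw [Finset.card_insert_of_notMem (by simp [hua, hub, huc, huv]),
                  Finset.card_insert_of_notMem (by simp [hab, hac, hav]),
                  Finset.card_insert_of_notMem (by simp [hbc, hbv]),
                  Finset.card_insert_of_notMem (by simp [hcv]),
                  Finset.card_singleton]
              have hcard1 : ({({u,a} : Finset ℕ), {b,c}, {c,v}} : Finset (Finset ℕ)).card ≤ 3 := by
                calc ({({u,a} : Finset ℕ), {b,c}, {c,v}} : Finset (Finset ℕ)).card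
                    ≤ ({({b,c} : Finset ℕ), {c,v}} : Finset (Finset ℕ)).card + 1 :=
                      Finset.card_insert_le _ _
                  _ ≤ ({({c,v} : Finset ℕ)} : Finset (Finset ℕ)).card + 1 + 1 :=
                      Nat.add_le_add_right (Finset.card_insert_le _ _) 1
                  _ ≤ 3 := by simp
              have hcard2 : ({({u,a} : Finset ℕ), {a,b}, {c,v}} : Finset (Finset ℕ)).card ≤ 3 := by
                calc ({({u,a} : Finset ℕ), {a,b}, {c,v}} : Finset (Finset ℕ)).card
                    ≤ ({({a,b} : Finset ℕ), {c,v}} : Finset (Finset ℕ)).card + 1 :=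
                      Finset.card_insert_le _ _
                  _ ≤ ({({c,v} : Finset ℕ)} : Finset (Finset ℕ)).card + 1 + 1 :=
                      Nat.add_le_add_right (Finset.card_insert_le _ _) 1
                  _ ≤ 3 := by simp
              refine key_lemma S hS hq hufs {({u,a} : Finset ℕ), {b,c}, {c,v}}
                {({u,a} : Finset ℕ), {a,b}, {c,v}} ?_ ?_ ?_ ?_ ?_ ?_ ?_
              · intro A hA
                simp only [Finset.mem_insert, Finset.mem_singleton] at hA
                rcases hA with rfl | rfl | rfl
                · exact q1
                · exact q3
                · exact q4
              · intro A hA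
                simp only [Finset.mem_insert, Finset.mem_singleton] at hA
                rcases hA with rfl | rfl | rfl
                · exact q1
                · exact q2
                · exact q4
              · rw [hX1, hX2]
              · rw [hX1, hXcard]; omega
              · rw [hX1, hXcard]; omega
              · rw [hX1]
                intro hemp
                have : u ∈ (∅ : Finset ℕ) := by rw [← hemp]; simp
                simp at this
              · intro heq
                have hmem : ({b, c} : Finset ℕ) ∈
                    ({({u,a} : Finset ℕ), {a,b}, {c,v}} : Finset (Finset ℕ)) := by
                  rw [← heq]; simp
                simp only [Finset.mem_insert, Finset.mem_singleton] at hmem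
                rcases hmem with h' | h' | h'
                · have := Finset.ext_iff.mp h' b
                  simp [Ne.symm hub, Ne.symm hab] at this
                · have := Finset.ext_iff.mp h' c
                  simp [Ne.symm hac, Ne.symm hbc] at this
                · have := Finset.ext_iff.mp h' b
                  simp [hbc, hbv] at this
  · rintro ⟨v, cy, hcyc, hlen⟩
    cases cy with
    | nil => simp at hlen
    | cons h1 q =>
      rename_i a
      cases q with
      | nil => simp at hlen
      | cons h2 q =>
        rename_i b
        cases q with
        | nil => simp at hlen
        | cons h3 q =>
          rename_i c
          cases q with
          | nil => simp at hlen
          | cons h4 q =>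
            cases q with
            | cons h5 q => simp [SimpleGraph.Walk.length_cons] at hlen
            | nil =>
              rw [SimpleGraph.Walk.isCycle_def] at hcyc
              obtain ⟨-, -, hnd⟩ := hcyc
              simp only [SimpleGraph.Walk.support_cons, SimpleGraph.Walk.support_nil,
                List.tail_cons, List.nodup_cons, List.mem_cons, List.mem_singleton,
                List.not_mem_nil, List.nodup_nil, or_false, not_or, and_true] at hnd
              obtain ⟨⟨hab, hac, hav⟩, ⟨hbc, hbv⟩, hcv, -⟩ := hnd
              have hva : v ≠ a := (pairingGraph S).ne_of_adj h1
              have q1 := adj_quark S h1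
              have q2 := adj_quark S h2
              have q3 := adj_quark S h3
              have q4 := adj_quark S h4
              have hX1 : (({({v,a} : Finset ℕ), {b,c}} : Finset (Finset ℕ)).sup id)
                  = ({v, a, b, c} : Finset ℕ) := by
                simp only [Finset.sup_insert, Finset.sup_singleton, id_eq, Finset.sup_eq_union]
                ext x
                simp [Finset.mem_union, Finset.mem_insert, Finset.mem_singleton]
                tauto
              have hX2 : (({({a,b} : Finset ℕ), {c,v}} : Finset (Finset ℕ)).sup id)
                  = ({v, a, b, c} : Finset ℕ) := by
                simp only [Finset.sup_insert, Finset.sup_singleton, id_eq, Finset.sup_eq_union]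
                ext x
                simp [Finset.mem_union, Finset.mem_insert, Finset.mem_singleton]
                tauto
              have hXcard : ({v, a, b, c} : Finset ℕ).card = 4 := by
                rw [Finset.card_insert_of_notMem (by simp [hva, Ne.symm hbv, Ne.symm hcv]),
                  Finset.card_insert_of_notMem (by simp [hab, hac]),
                  Finset.card_insert_of_notMem (by simp [hbc]),
                  Finset.card_singleton]
              have hcard1 : ({({v,a} : Finset ℕ), {b,c}} : Finset (Finset ℕ)).card ≤ 2 :=
                (Finset.card_insert_le _ _).trans (by simp)
              have hcard2 : ({({a,b} : Finset ℕ), {c,v}} : Finset (Finset ℕ)).card ≤ 2 :=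
                (Finset.card_insert_le _ _).trans (by simp)
              refine key_lemma S hS hq hufs {({v,a} : Finset ℕ), {b,c}}
                {({a,b} : Finset ℕ), {c,v}} ?_ ?_ ?_ ?_ ?_ ?_ ?_
              · intro A hA
                simp only [Finset.mem_insert, Finset.mem_singleton] at hA
                rcases hA with rfl | rfl
                · exact q1
                · exact q3
              · intro A hA
                simp only [Finset.mem_insert, Finset.mem_singleton] at hA
                rcases hA with rfl | rfl
                · exact q2
                · exact q4
              · rw [hX1, hX2]
              · rw [hX1, hXcard]; omega
              · rw [hX1, hXcard]; omega
              · rw [hX1]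
                intro hemp
                have : v ∈ (∅ : Finset ℕ) := by rw [← hemp]; simp
                simp at this
              · intro heq
                have hmem : ({v, a} : Finset ℕ) ∈
                    ({({a,b} : Finset ℕ), {c,v}} : Finset (Finset ℕ)) := by
                  rw [← heq]; simp
                simp only [Finset.mem_insert, Finset.mem_singleton] at hmem
                rcases hmem with h' | h'
                · have := Finset.ext_iff.mp h' v
                  simp [hva, Ne.symm hbv] at this
                · have := Finset.ext_iff.mp h' a
                  simp [hac, hav] at this
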